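/- arXiv:2408.03179 — 5 statements merged into one kernel-verified Lean document; each statement's English description precedes it below -/
import Mathlib

section
/- Let W = {(W_i, ω_i)}_{i∈I} be a fusion Riesz basis for an infinite-dimensional Hilbert space H with |I| > 2, such that W⊥ = {(W_i⊥, ω_i)}_{i∈I} is a fusion frame. Then e(W⊥) = ∞. -/
noncomputable section
open scoped ENNReal

/-- `W = {(W i, ω i)}` is a fusion frame for `H`. -/
def IsFusionFrame {H : Type} [NormedAddCommGroup H] [InnerProductSpace ℂ H]
    {ι : Type} (W : ι → Submodule ℂ H) [∀ i, Submodule.HasOrthogonalProjection (W i)]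
    (ω : ι → ℝ) : Prop :=
  (∀ i, 0 < ω i) ∧ ∃ A B : ℝ, 0 < A ∧ A ≤ B ∧ ∀ f : H,
    (A * ‖f‖ ^ 2 ≤ ∑' i, ω i ^ 2 * ‖(Submodule.orthogonalProjectionOnto (W i) f : H)‖ ^ 2) ∧
    (∑' i, ω i ^ 2 * ‖(Submodule.orthogonalProjectionOnto (W i) f : H)‖ ^ 2 ≤ B * ‖f‖ ^ 2)

/-- `W = {(W i, ω i)}` is a fusion Riesz basis for `H`. -/
def IsFusionRieszBasis {H : Type} [NormedAddCommGroup H] [InnerProductSpace ℂ H]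
    {ι : Type} (W : ι → Submodule ℂ H) (ω : ι → ℝ) : Prop :=
  (∀ i, 0 < ω i) ∧ (⨆ i, W i).topologicalClosure = ⊤ ∧
  ∃ C D : ℝ, 0 < C ∧ C ≤ D ∧ ∀ (s : Finset ι) (f : ∀ i, W i),
    (C * ∑ j ∈ s, ‖(f j : H)‖ ^ 2 ≤ ‖∑ j ∈ s, ω j • (f j : H)‖ ^ 2) ∧
    (‖∑ j ∈ s, ω j • (f j : H)‖ ^ 2 ≤ D * ∑ j ∈ s, ‖(f j : H)‖ ^ 2)

/-- helper: a non-finite-dimensional space has rank at least `ℵ₀`. -/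
lemma aux_aleph0_le_rank_of_not_fd {K V : Type*} [DivisionRing K] [AddCommGroup V]
    [Module K V] (h : ¬ FiniteDimensional K V) : Cardinal.aleph0 ≤ Module.rank K V := by
  by_contra h'
  push_neg at h'
  exact h (IsNoetherian.iff_fg.mp (IsNoetherian.iff_rank_lt_aleph0.mpr h'))

/-- helper: `lp.single` is additive. -/
lemma aux_lp_single_add {α : Type*} {E : α → Type*} [∀ i, NormedAddCommGroup (E i)]
    [DecidableEq α] (p : ℝ≥0∞) (i : α) (a b : E i) :
    lp.single p i (a + b) = lp.single p i a + lp.single p i b := by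
  apply lp.ext
  funext j
  rw [lp.coeFn_add, Pi.add_apply]
  by_cases h : j = i
  · subst h
    rw [lp.single_apply_self, lp.single_apply_self, lp.single_apply_self]
  · rw [lp.single_apply_ne _ _ _ h, lp.single_apply_ne _ _ _ h, lp.single_apply_ne _ _ _ h,
      add_zero]

/-- helper: any singleton-avoiding pair exists when `2 < #ι`. -/
lemma aux_exists_pair_ne {ι : Type} (hI : 2 < Cardinal.mk ι) (c : ι) :
    ∃ a b : ι, a ≠ b ∧ a ≠ c ∧ b ≠ c := by
  classical
  by_contra h
  push_neg at h
  have key : ∀ x y : ι, x ≠ c → y ≠ c → x = y := by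
    intro x y hx hy
    by_contra hne
    exact hy (h x y hne hx)
  by_cases hd : ∃ d : ι, d ≠ c
  · obtain ⟨d, hd⟩ := hd
    have hsurj : Function.Surjective (fun n : Fin 2 => if n = 0 then c else d) := by
      intro x
      by_cases hx : x = c
      · exact ⟨0, by simp [hx]⟩
      · exact ⟨1, by simp [(key x d hx hd).symm]⟩
    have hle : Cardinal.mk ι ≤ Cardinal.mk (Fin 2) := Cardinal.mk_le_of_surjective hsurj
    rw [Cardinal.mk_fin] at hle
    have : (2 : Cardinal) < 2 := lt_of_lt_of_le hI (by exact_mod_cast hle)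
    exact absurd this (lt_irrefl _)
  · push_neg at hd
    haveI : Subsingleton ι := ⟨fun x y => (hd x).trans (hd y).symm⟩
    have hle : Cardinal.mk ι ≤ 1 := Cardinal.le_one_iff_subsingleton.mpr inferInstance
    have : (2 : Cardinal) < 1 := lt_of_lt_of_le hI hle
    exact absurd this (by norm_num)

set_option maxHeartbeats 2000000 in
/-- if `W` is a fusion Riesz basis of an infinite-dimensional
Hilbert space with `|I| > 2` and `W⊥` is a fusion frame, then `e(W⊥) = ∞`. -/
theorem excess_orthogonalComplement_of_fusionRieszBasis_infinite
    {H : Type} [NormedAddCommGroup H] [InnerProductSpace ℂ H] [CompleteSpace H]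
    (hinf : ¬ FiniteDimensional ℂ H)
    {ι : Type} (hI : 2 < Cardinal.mk ι)
    (W : ι → Submodule ℂ H) [∀ i, CompleteSpace (W i)] (ω : ι → ℝ)
    (hW : IsFusionRieszBasis W ω)
    (hWperp : IsFusionFrame (fun i => (W i)ᗮ) ω)
    -- synthesis operator of `W⊥`:
    (T : lp (fun i => ↥((W i)ᗮ)) 2 →L[ℂ] H)
    (hT : ∀ g : lp (fun i => ↥((W i)ᗮ)) 2, T g = ∑' i, ω i • ((g i : H))) :
    Cardinal.aleph0 ≤ Module.rank ℂ (LinearMap.ker (T : lp (fun i => ↥((W i)ᗮ)) 2 →ₗ[ℂ] H)) := by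
  classical
  obtain ⟨hω, hcompl, C, D, hC, hCD, hRiesz⟩ := hW
  -- the subspace generated by all `W c` with `c ∉ {a, b}`
  set p : ι → ι → ι → Submodule ℂ H :=
    fun a b c => if c = a ∨ c = b then ⊥ else W c with hp
  -- Step 1: find a pair `a ≠ b` such that `N a b := ⨆ c, p a b c` is infinite-dimensional
  have hstep1 : ∃ a b : ι, a ≠ b ∧ ¬ FiniteDimensional ℂ ↥(⨆ c, p a b c) := by
    by_cases hfd : ∀ i, FiniteDimensional ℂ (W i)
    · -- all `W i` finite-dimensional: any pair works
      have hnt : Nontrivial ι := Cardinal.one_lt_iff_nontrivial.mp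
        (lt_trans (by norm_num) hI)
      obtain ⟨a, b, hab⟩ := exists_pair_ne ι
      refine ⟨a, b, hab, fun hN => ?_⟩
      haveI := hN
      haveI := hfd a; haveI := hfd b
      haveI : FiniteDimensional ℂ ↥(W b ⊔ ⨆ c, p a b c) :=
        Submodule.finiteDimensional_sup _ _
      haveI h1 : FiniteDimensional ℂ ↥(W a ⊔ (W b ⊔ ⨆ c, p a b c)) :=
        Submodule.finiteDimensional_sup _ _
      have h2 : (⨆ i, W i) ≤ W a ⊔ (W b ⊔ ⨆ c, p a b c) := by
        refine iSup_le fun i => ?_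
        by_cases hia : i = a
        · subst hia; exact le_sup_left
        · by_cases hib : i = b
          · subst hib; exact le_trans le_sup_left le_sup_right
          · have : W i = p a b i := by simp [hp, hia, hib]
            rw [this]
            exact le_trans (le_trans (le_iSup _ i) le_sup_right) le_sup_right
      have hclosed : IsClosed ((W a ⊔ (W b ⊔ ⨆ c, p a b c) : Submodule ℂ H) : Set H) :=
        Submodule.closed_of_finiteDimensional _
      have h3 : (⊤ : Submodule ℂ H) ≤ W a ⊔ (W b ⊔ ⨆ c, p a b c) := by
        rw [← hcompl]
        exact Submodule.topologicalClosure_minimal _ h2 hclosed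
      have h4 : W a ⊔ (W b ⊔ ⨆ c, p a b c) = ⊤ := le_antisymm le_top h3
      rw [h4] at h1
      exact hinf (Submodule.topEquiv.finiteDimensional)
    · -- some `W c` is infinite-dimensional: choose a pair avoiding `c`
      push_neg at hfd
      obtain ⟨c, hc⟩ := hfd
      obtain ⟨a, b, hab, hac, hbc⟩ := aux_exists_pair_ne hI c
      refine ⟨a, b, hab, fun hN => ?_⟩
      have hle : W c ≤ ⨆ d, p a b d := by
        have hc' : ¬(c = a ∨ c = b) := by
          rintro (h | h)
          exacts [hac h.symm, hbc h.symm]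
        have : W c = p a b c := by
          simp only [hp]
          rw [if_neg hc']
        rw [this]; exact le_iSup _ c
      exact hc (Submodule.finiteDimensional_of_le hle)
  obtain ⟨a, b, hab, hN⟩ := hstep1
  set N : Submodule ℂ H := ⨆ c, p a b c with hNdef
  set M : Submodule ℂ H := (W a ⊔ W b).topologicalClosure with hMdef
  haveI : CompleteSpace M := (Submodule.isClosed_topologicalClosure _).completeSpace_coe
  -- Step 2 (key Riesz estimate): `N ∩ M = 0`
  have hNM : ∀ z : H, z ∈ N → z ∈ M → z = 0 := by
    intro z hzN hzM
    rw [hNdef, Submodule.mem_iSup_iff_exists_finsupp] at hzN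
    obtain ⟨μ, hμ, hμsum⟩ := hzN
    have hμa : μ a = 0 := by
      have := hμ a
      simp [hp] at this
      exact this
    have hμb : μ b = 0 := by
      have := hμ b
      simp [hp] at this
      exact this
    have ha_supp : a ∉ μ.support := by simp [hμa]
    have hb_supp : b ∉ μ.support := by simp [hμb]
    have hmemW : ∀ i ∈ μ.support, μ i ∈ W i := by
      intro i hi
      have hia : i ≠ a := fun h => ha_supp (h ▸ hi)
      have hib : i ≠ b := fun h => hb_supp (h ▸ hi)
      have := hμ i
      simpa [hp, hia, hib] using this
    set δ : ℝ := C * ∑ c ∈ μ.support, ‖(ω c)⁻¹ • μ c‖ ^ 2 with hδdef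
    have hδlt : ∀ ε : ℝ, 0 < ε → δ < ε ^ 2 := by
      intro ε hε
      -- approximate `z` by an element of `W a ⊔ W b`
      have hz_clos : z ∈ closure ((W a ⊔ W b : Submodule ℂ H) : Set H) := by
        rw [← Submodule.topologicalClosure_coe]
        exact hzM
      obtain ⟨u, huWab, hu_dist⟩ := Metric.mem_closure_iff.mp hz_clos ε hε
      obtain ⟨x, hx, y, hy, hxy⟩ := Submodule.mem_sup.mp huWab
      -- build the finite family for the Riesz inequality
      set f : ∀ i, W i := fun i =>
        if hia : i = a then ⟨(ω a)⁻¹ • x, by rw [hia]; exact (W a).smul_of_tower_mem _ hx⟩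
        else if hib : i = b then ⟨(ω b)⁻¹ • y, by rw [hib]; exact (W b).smul_of_tower_mem _ hy⟩
        else if hiS : i ∈ μ.support then
          ⟨-((ω i)⁻¹ • μ i), Submodule.neg_mem _ ((W i).smul_of_tower_mem _ (hmemW i hiS))⟩
        else 0
        with hf
      have hfa : (f a : H) = (ω a)⁻¹ • x := by simp [hf]
      have hfb : (f b : H) = (ω b)⁻¹ • y := by simp [hf, hab.symm]
      have hfc : ∀ i ∈ μ.support, (f i : H) = -((ω i)⁻¹ • μ i) := by
        intro i hi
        have hia : i ≠ a := fun h => ha_supp (h ▸ hi)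
        have hib : i ≠ b := fun h => hb_supp (h ▸ hi)
        simp only [hf]
        rw [dif_neg hia, dif_neg hib, dif_pos hi]
      set s : Finset ι := insert a (insert b μ.support) with hs
      have ha_nmem : a ∉ insert b μ.support := by
        simp [hab, ha_supp]
      have hsum_eq : ∑ j ∈ s, ω j • (f j : H) = x + y - z := by
        rw [hs, Finset.sum_insert ha_nmem, Finset.sum_insert hb_supp]
        have h1 : ω a • (f a : H) = x := by
          rw [hfa, smul_inv_smul₀ (ne_of_gt (hω a))]
        have h2 : ω b • (f b : H) = y := by
          rw [hfb, smul_inv_smul₀ (ne_of_gt (hω b))]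
        have h3 : ∑ c ∈ μ.support, ω c • (f c : H) = -z := by
          rw [← hμsum]
          rw [Finsupp.sum, ← Finset.sum_neg_distrib]
          refine Finset.sum_congr rfl fun i hi => ?_
          rw [hfc i hi, smul_neg, smul_inv_smul₀ (ne_of_gt (hω i))]
        rw [h1, h2, h3]
        abel
      have hsum_ge : ∑ c ∈ μ.support, ‖(ω c)⁻¹ • μ c‖ ^ 2 ≤ ∑ j ∈ s, ‖(f j : H)‖ ^ 2 := by
        have : ∑ c ∈ μ.support, ‖(ω c)⁻¹ • μ c‖ ^ 2 = ∑ c ∈ μ.support, ‖(f c : H)‖ ^ 2 := by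
          refine Finset.sum_congr rfl fun i hi => ?_
          rw [hfc i hi, norm_neg]
        rw [this, hs, Finset.sum_insert ha_nmem, Finset.sum_insert hb_supp]
        nlinarith [sq_nonneg ‖(f a : H)‖, sq_nonneg ‖(f b : H)‖]
      have hR := (hRiesz s f).1
      have hnorm : ‖∑ j ∈ s, ω j • (f j : H)‖ < ε := by
        rw [hsum_eq]
        have : x + y - z = -(z - u) := by rw [hxy]; abel
        rw [this, norm_neg, ← dist_eq_norm]
        exact hu_dist
      calc δ ≤ C * ∑ j ∈ s, ‖(f j : H)‖ ^ 2 := by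
              exact mul_le_mul_of_nonneg_left hsum_ge (le_of_lt hC)
        _ ≤ ‖∑ j ∈ s, ω j • (f j : H)‖ ^ 2 := hR
        _ < ε ^ 2 := by
              refine pow_lt_pow_left₀ hnorm (norm_nonneg _) (by norm_num)
    have hδ0 : δ ≤ 0 := by
      by_contra hpos
      push_neg at hpos
      have := hδlt (Real.sqrt δ) (Real.sqrt_pos.mpr hpos)
      rw [Real.sq_sqrt (le_of_lt hpos)] at this
      exact lt_irrefl _ this
    have hsum0 : ∑ c ∈ μ.support, ‖(ω c)⁻¹ • μ c‖ ^ 2 = 0 := by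
      have hnn : (0:ℝ) ≤ ∑ c ∈ μ.support, ‖(ω c)⁻¹ • μ c‖ ^ 2 :=
        Finset.sum_nonneg fun i _ => sq_nonneg _
      nlinarith
    have hterm : ∀ i ∈ μ.support, μ i = 0 := by
      intro i hi
      have := (Finset.sum_eq_zero_iff_of_nonneg fun j _ => sq_nonneg ‖(ω j)⁻¹ • μ j‖).mp
        hsum0 i hi
      have h2 : (ω i)⁻¹ • μ i = 0 := by
        have := pow_eq_zero_iff (n := 2) (by norm_num) |>.mp this
        exact norm_eq_zero.mp this
      rcases smul_eq_zero.mp h2 with h | h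
      · exact absurd h (inv_ne_zero (ne_of_gt (hω i)))
      · exact h
    rw [← hμsum, Finsupp.sum]
    exact Finset.sum_eq_zero fun i hi => hterm i hi
  -- Step 3: build an injective map from `N` into `ker T`
  have hMa : Mᗮ ≤ (W a)ᗮ :=
    Submodule.orthogonal_le (le_trans le_sup_left (Submodule.le_topologicalClosure _))
  have hMb : Mᗮ ≤ (W b)ᗮ :=
    Submodule.orthogonal_le (le_trans le_sup_right (Submodule.le_topologicalClosure _))
  set q : H → H := fun h => (Submodule.orthogonalProjectionOnto Mᗮ h : H) with hq
  have hqmem : ∀ h : H, q h ∈ Mᗮ := fun h => (Submodule.orthogonalProjectionOnto Mᗮ h).2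
  set r : ℝ := ω a / ω b with hr
  set gf : ↥N → lp (fun i => ↥((W i)ᗮ)) 2 := fun x =>
    lp.single 2 a (⟨q x, hMa (hqmem _)⟩ : ↥((W a)ᗮ)) -
      lp.single 2 b (⟨r • q x, hMb ((Mᗮ).smul_of_tower_mem r (hqmem _))⟩ : ↥((W b)ᗮ))
    with hgf
  have hcoord_a : ∀ x : ↥N, ((gf x) a : H) = q x := by
    intro x
    rw [hgf]
    simp only [lp.coeFn_sub, Pi.sub_apply]
    rw [lp.single_apply_self, lp.single_apply_ne _ _ _ hab]
    simp
  have hcoord_b : ∀ x : ↥N, ((gf x) b : H) = -(r • q x) := by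
    intro x
    rw [hgf]
    simp only [lp.coeFn_sub, Pi.sub_apply]
    rw [lp.single_apply_self, lp.single_apply_ne _ _ _ hab.symm]
    simp
  have hcoord_o : ∀ (x : ↥N) (i : ι), i ≠ a → i ≠ b → ((gf x) i : H) = 0 := by
    intro x i hia hib
    rw [hgf]
    simp only [lp.coeFn_sub, Pi.sub_apply]
    rw [lp.single_apply_ne _ _ _ hia, lp.single_apply_ne _ _ _ hib]
    simp
  have hker : ∀ x : ↥N, T (gf x) = 0 := by
    intro x
    rw [hT]
    have hzero : ∀ i ∉ ({a, b} : Finset ι), ω i • ((gf x) i : H) = 0 := by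
      intro i hi
      simp only [Finset.mem_insert, Finset.mem_singleton] at hi
      push_neg at hi
      rw [hcoord_o x i hi.1 hi.2, smul_zero]
    rw [tsum_eq_sum hzero, Finset.sum_pair hab, hcoord_a, hcoord_b]
    rw [smul_neg, smul_smul, hr, mul_div_cancel₀ (ω a) (ne_of_gt (hω b))]
    abel
  -- `gf` respects the module structure
  have hq_linear : ∀ (c : ℂ) (v w : H), q (c • v + w) = c • q v + q w := by
    intro c v w
    rw [hq]
    simp [map_add, map_smul]
  set Φ : ↥N →ₗ[ℂ] ↥(LinearMap.ker (T : lp (fun i => ↥((W i)ᗮ)) 2 →ₗ[ℂ] H)) :=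
    { toFun := fun x => ⟨gf x, LinearMap.mem_ker.mpr (hker x)⟩
      map_add' := by
        intro x y
        apply Subtype.ext
        show gf (x + y) = gf x + gf y
        apply lp.ext
        funext j
        apply Subtype.ext
        have hco : (((gf x + gf y) : lp (fun i => ↥((W i)ᗮ)) 2) j : H) =
            ((gf x) j : H) + ((gf y) j : H) := by
          rw [lp.coeFn_add]; rfl
        show ((gf (x + y)) j : H) = _
        rw [hco]
        by_cases hja : j = a
        · subst hja
          rw [hcoord_a, hcoord_a, hcoord_a]
          simp only [hq, Submodule.coe_add, map_add]
        · by_cases hjb : j = b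
          · subst hjb
            rw [hcoord_b, hcoord_b, hcoord_b]
            simp only [hq, Submodule.coe_add, map_add, smul_add, neg_add]
          · rw [hcoord_o _ _ hja hjb, hcoord_o _ _ hja hjb, hcoord_o _ _ hja hjb, add_zero]
      map_smul' := by
        intro c x
        apply Subtype.ext
        show gf (c • x) = c • gf x
        apply lp.ext
        funext j
        apply Subtype.ext
        have hco : (((c • gf x) : lp (fun i => ↥((W i)ᗮ)) 2) j : H) =
            c • ((gf x) j : H) := by
          rw [lp.coeFn_smul]; rfl
        show ((gf (c • x)) j : H) = _
        rw [hco]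
        by_cases hja : j = a
        · subst hja
          rw [hcoord_a, hcoord_a]
          simp only [hq, Submodule.coe_smul, map_smul]
        · by_cases hjb : j = b
          · subst hjb
            rw [hcoord_b, hcoord_b]
            simp only [hq, Submodule.coe_smul, map_smul]
            rw [smul_comm r c, ← smul_neg]
          · rw [hcoord_o _ _ hja hjb, hcoord_o _ _ hja hjb, smul_zero] }
    with hΦ
  have hinj : Function.Injective Φ := by
    intro x y hxy
    have hg : gf x = gf y := by
      have := congrArg (Subtype.val) hxy
      exact this
    have hqeq : q x = q y := by
      have := congrArg (fun g : lp (fun i => ↥((W i)ᗮ)) 2 => ((g a : ↥((W a)ᗮ)) : H)) hg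
      simpa [hcoord_a] using this
    have hdiff : ((x : H) - (y : H)) ∈ M := by
      have hP : Submodule.orthogonalProjectionOnto Mᗮ ((x : H) - (y : H)) = 0 := by
        apply Subtype.ext
        rw [ZeroMemClass.coe_zero, map_sub, Submodule.coe_sub]
        show q (x : H) - q (y : H) = 0
        rw [hqeq, sub_self]
      have := Submodule.orthogonalProjectionOnto_eq_zero_iff.mp hP
      rwa [Submodule.orthogonal_orthogonal] at this
    have hdiffN : ((x : H) - (y : H)) ∈ N := Submodule.sub_mem _ x.2 y.2
    have := hNM _ hdiffN hdiff
    exact Subtype.ext (by rwa [sub_eq_zero] at this)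
  calc Cardinal.aleph0 ≤ Module.rank ℂ ↥N := aux_aleph0_le_rank_of_not_fd hN
    _ ≤ Module.rank ℂ ↥(LinearMap.ker (T : lp (fun i => ↥((W i)ᗮ)) 2 →ₗ[ℂ] H)) := Φ.rank_le_of_injective hinj
end
end

section
/- Let W = {(W_i, ω_i)}_{i∈I} be a fusion Riesz basis for H with |I| ≥ 2. Then for every pair of distinct indices ℓ, k ∈ I, the two-element family {(W_ℓ⊥, ω_ℓ), (W_k⊥, ω_k)} is a fusion frame for H. -/
noncomputable section
open scoped ENNReal

set_option maxHeartbeats 1600000 in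
/-- if `W` is a fusion Riesz basis with `|I| ≥ 2`, then for all
distinct `ℓ, k` the family `{(W ℓᗮ, ω ℓ), (W kᗮ, ω k)}` is a fusion frame. -/
theorem two_orthogonalComplements_fusionFrame
    {H : Type} [NormedAddCommGroup H] [InnerProductSpace ℂ H] [CompleteSpace H]
    {ι : Type} (W : ι → Submodule ℂ H) [∀ i, CompleteSpace (W i)] (ω : ι → ℝ)
    (hW : IsFusionRieszBasis W ω)
    (l k : ι) (hlk : l ≠ k) :
    ∃ A B : ℝ, 0 < A ∧ A ≤ B ∧ ∀ f : H,
      (A * ‖f‖ ^ 2 ≤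
        ω l ^ 2 * ‖(Submodule.orthogonalProjectionOnto (W l)ᗮ f : H)‖ ^ 2 +
          ω k ^ 2 * ‖(Submodule.orthogonalProjectionOnto (W k)ᗮ f : H)‖ ^ 2) ∧
      (ω l ^ 2 * ‖(Submodule.orthogonalProjectionOnto (W l)ᗮ f : H)‖ ^ 2 +
          ω k ^ 2 * ‖(Submodule.orthogonalProjectionOnto (W k)ᗮ f : H)‖ ^ 2 ≤ B * ‖f‖ ^ 2) := by
  classical
  obtain ⟨hω, -, C, D, hC, hCD, hR⟩ := hW
  have hωl := hω l
  have hωk := hω k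
  set A : ℝ := min (ω l ^ 2) (ω k ^ 2) / (2 * ω l ^ 2 / C + 1) with hA
  have hApos : 0 < A := by
    rw [hA]
    exact div_pos (lt_min (by positivity) (by positivity)) (by positivity)
  clear_value A
  refine ⟨A, ω l ^ 2 + ω k ^ 2, ?_, ?_, ?_⟩
  · exact hApos
  · have h1 : (1 : ℝ) ≤ 2 * ω l ^ 2 / C + 1 := by
      have : 0 ≤ 2 * ω l ^ 2 / C := by positivity
      linarith
    calc A ≤ min (ω l ^ 2) (ω k ^ 2) := by
            rw [hA]
            exact div_le_self (le_min (by positivity) (by positivity)) h1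
      _ ≤ ω l ^ 2 := min_le_left _ _
      _ ≤ ω l ^ 2 + ω k ^ 2 := le_add_of_nonneg_right (by positivity)
  intro x
  set a : ℝ := ‖(Submodule.orthogonalProjectionOnto (W l)ᗮ x : H)‖ with ha
  set b : ℝ := ‖(Submodule.orthogonalProjectionOnto (W k)ᗮ x : H)‖ with hb
  set p : ℝ := ‖(Submodule.orthogonalProjectionOnto (W l) x : H)‖ with hp
  set q : ℝ := ‖(Submodule.orthogonalProjectionOnto (W k) x : H)‖ with hq
  have hpyl : ‖x‖ ^ 2 = p ^ 2 + a ^ 2 := by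
    rw [hp, ha, ← Submodule.coe_norm, ← Submodule.coe_norm]
    exact Submodule.norm_sq_eq_add_norm_sq_projection x (W l)
  have hpyk : ‖x‖ ^ 2 = q ^ 2 + b ^ 2 := by
    rw [hq, hb, ← Submodule.coe_norm, ← Submodule.coe_norm]
    exact Submodule.norm_sq_eq_add_norm_sq_projection x (W k)
  have ha0 : 0 ≤ a := norm_nonneg _
  have hb0 : 0 ≤ b := norm_nonneg _
  have hp0 : 0 ≤ p := norm_nonneg _
  have hq0 : 0 ≤ q := norm_nonneg _
  constructor
  · -- lower bound
    set vl : W l := (ω l)⁻¹ • Submodule.orthogonalProjectionOnto (W l) x with hvl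
    set vk : W k := (-(ω k)⁻¹) • Submodule.orthogonalProjectionOnto (W k) x with hvk
    set f : ∀ i, W i := Function.update (Function.update (fun i => (0 : W i)) l vl) k vk
      with hf
    have hfl : f l = vl := by
      rw [hf, Function.update_of_ne hlk, Function.update_self]
    have hfk : f k = vk := Function.update_self _ _ _
    have hsum : ∑ j ∈ ({l, k} : Finset ι), ω j • (f j : H)
        = (Submodule.orthogonalProjectionOnto (W l) x : H) - (Submodule.orthogonalProjectionOnto (W k) x : H) := by
      rw [Finset.sum_pair hlk, hfl, hfk, hvl, hvk]
      rw [Submodule.coe_smul_of_tower, Submodule.coe_smul_of_tower, smul_smul, smul_smul,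
        mul_inv_cancel₀ hωl.ne', mul_neg, mul_inv_cancel₀ hωk.ne', one_smul, neg_one_smul]
      abel
    have hnormsum : ∑ j ∈ ({l, k} : Finset ι), ‖(f j : H)‖ ^ 2
        = ((ω l)⁻¹ * p) ^ 2 + ((ω k)⁻¹ * q) ^ 2 := by
      rw [Finset.sum_pair hlk, hfl, hfk, hvl, hvk]
      rw [Submodule.coe_smul_of_tower, Submodule.coe_smul_of_tower, norm_smul, norm_smul]
      rw [Real.norm_eq_abs, Real.norm_eq_abs, abs_neg, abs_inv, abs_inv,
        abs_of_pos hωl, abs_of_pos hωk]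
    have hlow := (hR {l, k} f).1
    rw [hsum, hnormsum] at hlow
    clear_value vl vk f
    clear hf hfl hfk hsum hnormsum hR f
    clear hvl hvk vl vk
    clear_value a b p q
    have hdiff : (Submodule.orthogonalProjectionOnto (W l) x : H) - (Submodule.orthogonalProjectionOnto (W k) x : H)
        = (Submodule.orthogonalProjectionOnto (W k)ᗮ x : H) - (Submodule.orthogonalProjectionOnto (W l)ᗮ x : H) := by
      have h1 : (Submodule.orthogonalProjectionOnto (W l) x : H) + (Submodule.orthogonalProjectionOnto (W l)ᗮ x : H) = x := by
          have := Submodule.starProjection_add_starProjection_orthogonal (K := W l) x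
          rwa [Submodule.starProjection_apply, Submodule.starProjection_apply] at this
      have h2 : (Submodule.orthogonalProjectionOnto (W k) x : H) + (Submodule.orthogonalProjectionOnto (W k)ᗮ x : H) = x := by
          have := Submodule.starProjection_add_starProjection_orthogonal (K := W k) x
          rwa [Submodule.starProjection_apply, Submodule.starProjection_apply] at this
      rw [eq_sub_of_add_eq h1, eq_sub_of_add_eq h2]
      abel
    rw [hdiff] at hlow
    have hnd : ‖(Submodule.orthogonalProjectionOnto (W k)ᗮ x : H) - (Submodule.orthogonalProjectionOnto (W l)ᗮ x : H)‖
        ≤ b + a := by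
      rw [hb, ha]
      exact norm_sub_le _ _
    have hn0 : (0:ℝ) ≤ ‖(Submodule.orthogonalProjectionOnto (W k)ᗮ x : H) -
        (Submodule.orthogonalProjectionOnto (W l)ᗮ x : H)‖ := norm_nonneg _
    have hnd2 : ‖(Submodule.orthogonalProjectionOnto (W k)ᗮ x : H) - (Submodule.orthogonalProjectionOnto (W l)ᗮ x : H)‖ ^ 2
        ≤ 2 * a ^ 2 + 2 * b ^ 2 := by
      have h3 : ‖(Submodule.orthogonalProjectionOnto (W k)ᗮ x : H) -
          (Submodule.orthogonalProjectionOnto (W l)ᗮ x : H)‖ ^ 2 ≤ (b + a) ^ 2 := by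
        apply pow_le_pow_left₀ hn0 hnd
      nlinarith [sq_nonneg (a - b)]
    have key : C * (((ω l)⁻¹ * p) ^ 2 + ((ω k)⁻¹ * q) ^ 2) ≤ 2 * a ^ 2 + 2 * b ^ 2 :=
      le_trans hlow hnd2
    have keyl : C * ((ω l)⁻¹ * p) ^ 2 ≤ 2 * a ^ 2 + 2 * b ^ 2 := by
      have h4 : 0 ≤ C * ((ω k)⁻¹ * q) ^ 2 := by positivity
      have h5 : C * (((ω l)⁻¹ * p) ^ 2 + ((ω k)⁻¹ * q) ^ 2)
          = C * ((ω l)⁻¹ * p) ^ 2 + C * ((ω k)⁻¹ * q) ^ 2 := mul_add _ _ _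
      linarith
    have hinv : ((ω l)⁻¹ * p) ^ 2 = p ^ 2 / ω l ^ 2 := by
      rw [mul_pow, inv_pow]
      ring
    rw [hinv] at keyl
    -- p ^ 2 ≤ (ω l ^ 2 / C) * (2 a² + 2 b²)
    have hp2 : p ^ 2 ≤ ω l ^ 2 / C * (2 * a ^ 2 + 2 * b ^ 2) := by
      rw [div_mul_eq_mul_div, le_div_iff₀ hC]
      have h5 : C * (p ^ 2 / ω l ^ 2) * ω l ^ 2 ≤ (2 * a ^ 2 + 2 * b ^ 2) * ω l ^ 2 :=
        mul_le_mul_of_nonneg_right keyl (by positivity)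
      have h6 : C * (p ^ 2 / ω l ^ 2) * ω l ^ 2 = p ^ 2 * C := by
        field_simp
      linarith [h5, h6.symm.le, h6.le]
    have hx2 : ‖x‖ ^ 2 ≤ (2 * ω l ^ 2 / C + 1) * (a ^ 2 + b ^ 2) := by
      have h7 : ω l ^ 2 / C * (2 * a ^ 2 + 2 * b ^ 2)
          = 2 * ω l ^ 2 / C * (a ^ 2 + b ^ 2) := by ring
      rw [h7] at hp2
      have h8 : 0 ≤ 2 * ω l ^ 2 / C * b ^ 2 := by positivity
      nlinarith
    have hden : (0:ℝ) < 2 * ω l ^ 2 / C + 1 := by positivity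
    have hAle : A * (2 * ω l ^ 2 / C + 1) = min (ω l ^ 2) (ω k ^ 2) := by
      rw [hA, div_mul_cancel₀ _ hden.ne']
    have hstep : A * ‖x‖ ^ 2 ≤ min (ω l ^ 2) (ω k ^ 2) * (a ^ 2 + b ^ 2) := by
      calc A * ‖x‖ ^ 2 ≤ A * ((2 * ω l ^ 2 / C + 1) * (a ^ 2 + b ^ 2)) :=
            mul_le_mul_of_nonneg_left hx2 hApos.le
        _ = A * (2 * ω l ^ 2 / C + 1) * (a ^ 2 + b ^ 2) := by ring
        _ = min (ω l ^ 2) (ω k ^ 2) * (a ^ 2 + b ^ 2) := by rw [hAle]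
    refine hstep.trans ?_
    have h1 : min (ω l ^ 2) (ω k ^ 2) * a ^ 2 ≤ ω l ^ 2 * a ^ 2 :=
      mul_le_mul_of_nonneg_right (min_le_left _ _) (by positivity)
    have h2 : min (ω l ^ 2) (ω k ^ 2) * b ^ 2 ≤ ω k ^ 2 * b ^ 2 :=
      mul_le_mul_of_nonneg_right (min_le_right _ _) (by positivity)
    have hdist : min (ω l ^ 2) (ω k ^ 2) * (a ^ 2 + b ^ 2)
        = min (ω l ^ 2) (ω k ^ 2) * a ^ 2 + min (ω l ^ 2) (ω k ^ 2) * b ^ 2 := by ring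
    linarith
  · -- upper bound
    clear_value a b p q
    clear hR
    have hax : a ^ 2 ≤ ‖x‖ ^ 2 := by linarith [sq_nonneg p]
    have hbx : b ^ 2 ≤ ‖x‖ ^ 2 := by linarith [sq_nonneg q]
    have h1 : ω l ^ 2 * a ^ 2 ≤ ω l ^ 2 * ‖x‖ ^ 2 :=
      mul_le_mul_of_nonneg_left hax (by positivity)
    have h2 : ω k ^ 2 * b ^ 2 ≤ ω k ^ 2 * ‖x‖ ^ 2 :=
      mul_le_mul_of_nonneg_left hbx (by positivity)
    linarith
end
end

section
/- Let {e_i}_{i∈Z} be an orthonormal basis of a Hilbert space H, W_1 = closed span of {e_i : i ≥ 0}, W_2 = closed span of {e_i : i ≤ 0}, and ω > 0. Then W = {(W_1, ω), (W_2, ω)} is a fusion frame for H with fusion frame operator S_W satisfying S_W^{-1} f = ω^{-2}(f − ⟨f, e_0⟩ e_0/2), and the excess of W equals 1. -/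
noncomputable section
open scoped ENNReal

open scoped ComplexConjugate

local notation "⟪" x ", " y "⟫" => @inner ℂ _ _ x y

lemma inner_zero_of_mem_closure_span {H : Type} [NormedAddCommGroup H] [InnerProductSpace ℂ H]
    {S : Set H} {x : H} (hx : ∀ s ∈ S, ⟪x, s⟫ = 0) :
    ∀ y ∈ (Submodule.span ℂ S).topologicalClosure, ⟪x, y⟫ = 0 := by
  have h1 : Submodule.span ℂ S ≤ (ℂ ∙ x)ᗮ :=
    Submodule.span_le.2 fun s hs =>
      Submodule.mem_orthogonal_singleton_iff_inner_right.2 (hx s hs)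
  have h2 := (Submodule.span ℂ S).topologicalClosure_minimal h1 (Submodule.isClosed_orthogonal _)
  exact fun y hy => Submodule.mem_orthogonal_singleton_iff_inner_right.1 (h2 hy)

lemma zero_of_orth {H : Type} [NormedAddCommGroup H] [InnerProductSpace ℂ H]
    {b : ℤ → H} (hbspan : (Submodule.span ℂ (Set.range b)).topologicalClosure = ⊤)
    {g : H} (hg : ∀ i, ⟪b i, g⟫ = 0) : g = 0 := by
  have : ⟪g, g⟫ = 0 := by
    have := inner_zero_of_mem_closure_span (S := Set.range b) (x := g)
      (by rintro s ⟨i, rfl⟩; rw [inner_eq_zero_symm]; exact hg i)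
    exact this g (by rw [hbspan]; trivial)
  simpa using this

section Main
set_option linter.unusedSectionVars false

variable {H : Type} [NormedAddCommGroup H] [InnerProductSpace ℂ H] [CompleteSpace H]
    (b : ℤ → H) (hb : Orthonormal ℂ b)
    (hbspan : (Submodule.span ℂ (Set.range b)).topologicalClosure = ⊤)
    (W₁ W₂ : Submodule ℂ H) [CompleteSpace W₁] [CompleteSpace W₂]
    (hW₁ : W₁ = (Submodule.span ℂ (b '' {i : ℤ | 0 ≤ i})).topologicalClosure)
    (hW₂ : W₂ = (Submodule.span ℂ (b '' {i : ℤ | i ≤ 0})).topologicalClosure)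

include hb hW₁ in
/-- negative basis vectors are orthogonal to W₁ -/
lemma orth_W₁ {i : ℤ} (hi : i < 0) {g : H} (hg : g ∈ W₁) : ⟪b i, g⟫ = 0 := by
  subst hW₁
  refine inner_zero_of_mem_closure_span ?_ g hg
  rintro s ⟨j, hj, rfl⟩
  have hj' : (0:ℤ) ≤ j := hj
  exact hb.2 (by omega)

include hb hW₂ in
lemma orth_W₂ {i : ℤ} (hi : 0 < i) {g : H} (hg : g ∈ W₂) : ⟪b i, g⟫ = 0 := by
  subst hW₂
  refine inner_zero_of_mem_closure_span ?_ g hg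
  rintro s ⟨j, hj, rfl⟩
  have hj' : j ≤ (0:ℤ) := hj
  exact hb.2 (by omega)

include hW₁ in
lemma mem_W₁ {i : ℤ} (hi : 0 ≤ i) : b i ∈ W₁ := by
  subst hW₁
  exact (Submodule.span ℂ _).le_topologicalClosure (Submodule.subset_span ⟨i, hi, rfl⟩)

include hW₂ in
lemma mem_W₂ {i : ℤ} (hi : i ≤ 0) : b i ∈ W₂ := by
  subst hW₂
  exact (Submodule.span ℂ _).le_topologicalClosure (Submodule.subset_span ⟨i, hi, rfl⟩)

include hb hbspan hW₂ in
/-- a vector orthogonal to all `b i`, `i ≥ 0`, lies in `W₂` -/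
lemma mem_W₂_of_orth {g : H} (hg : ∀ i : ℤ, 0 ≤ i → ⟪b i, g⟫ = 0) : g ∈ W₂ := by
  have hr : g - (Submodule.orthogonalProjectionOnto W₂ g : H) = 0 := by
    refine zero_of_orth hbspan fun i => ?_
    rcases le_or_gt i 0 with hi | hi
    · exact Submodule.inner_right_of_mem_orthogonal (mem_W₂ b W₂ hW₂ hi)
        (Submodule.sub_starProjection_mem_orthogonal g)
    · rw [inner_sub_right, hg i hi.le, orth_W₂ b hb W₂ hW₂ hi (Submodule.orthogonalProjectionOnto W₂ g).2,
        sub_zero]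
  have := sub_eq_zero.1 hr
  rw [this]
  exact (Submodule.orthogonalProjectionOnto W₂ g).2

include hb hbspan hW₁ hW₂ in
/-- key formula for the projection onto `W₂` -/
lemma proj_W₂ (f : H) :
    (Submodule.orthogonalProjectionOnto W₂ f : H)
      = (f - (Submodule.orthogonalProjectionOnto W₁ f : H)) + ⟪b 0, f⟫ • b 0 := by
  have hb00 : ⟪b 0, b 0⟫ = 1 := by
    have := hb.1 0
    rw [@inner_self_eq_norm_sq_to_K ℂ, this]; norm_num
  have hfp : f - (Submodule.orthogonalProjectionOnto W₁ f : H) ∈ W₁ᗮ :=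
    Submodule.sub_starProjection_mem_orthogonal f
  have hmem : (f - (Submodule.orthogonalProjectionOnto W₁ f : H)) + ⟪b 0, f⟫ • b 0 ∈ W₂ := by
    refine W₂.add_mem ?_ (W₂.smul_mem _ (mem_W₂ b W₂ hW₂ le_rfl))
    exact mem_W₂_of_orth b hb hbspan W₂ hW₂ fun i hi =>
      Submodule.inner_right_of_mem_orthogonal (mem_W₁ b W₁ hW₁ hi) hfp
  have key := Submodule.eq_starProjection_of_mem_of_inner_eq_zero (K := W₂) (u := f) hmem ?_
  · exact key
  · intro w hw
    have hw' : f - ((f - (Submodule.orthogonalProjectionOnto W₁ f : H)) + ⟪b 0, f⟫ • b 0)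
        = (Submodule.orthogonalProjectionOnto W₁ f : H) - ⟪b 0, f⟫ • b 0 := by abel
    rw [hw']
    rw [hW₂] at hw
    refine inner_zero_of_mem_closure_span ?_ w hw
    rintro s ⟨j, hj, rfl⟩
    rw [inner_sub_left, inner_smul_left]
    have hj0 : j ≤ (0:ℤ) := hj
    rcases lt_or_eq_of_le hj0 with hj' | rfl
    · rw [← inner_conj_symm, orth_W₁ b hb W₁ hW₁ hj' (Submodule.orthogonalProjectionOnto W₁ f).2,
        hb.2 (show (0:ℤ) ≠ j by omega)]
      simp
    · have h0 : ⟪b 0, (Submodule.orthogonalProjectionOnto W₁ f : H)⟫ = ⟪b 0, f⟫ := by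
        have := Submodule.inner_right_of_mem_orthogonal (mem_W₁ b W₁ hW₁ (le_refl (0:ℤ))) hfp
        rw [inner_sub_right, sub_eq_zero] at this
        exact this.symm
      rw [← h0, hb00, mul_one, inner_conj_symm, sub_self]

include hb hbspan hW₁ hW₂ in
lemma proj_sum (f : H) :
    (Submodule.orthogonalProjectionOnto W₁ f : H) + (Submodule.orthogonalProjectionOnto W₂ f : H)
      = f + ⟪b 0, f⟫ • b 0 := by
  rw [proj_W₂ b hb hbspan W₁ W₂ hW₁ hW₂ f]; abel

include hb hbspan hW₁ hW₂ in
lemma norm_sq_sum (f : H) :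
    ‖(Submodule.orthogonalProjectionOnto W₁ f : H)‖ ^ 2 + ‖(Submodule.orthogonalProjectionOnto W₂ f : H)‖ ^ 2
      = ‖f‖ ^ 2 + ‖⟪b 0, f⟫‖ ^ 2 := by
  set p₁ : H := (Submodule.orthogonalProjectionOnto W₁ f : H) with hp₁
  have hfp : f - p₁ ∈ W₁ᗮ := Submodule.sub_starProjection_mem_orthogonal f
  have h1 : ‖f‖ ^ 2 = ‖p₁‖ ^ 2 + ‖f - p₁‖ ^ 2 := by
    have h := norm_add_sq_eq_norm_sq_add_norm_sq_of_inner_eq_zero (𝕜 := ℂ) p₁ (f - p₁)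
      (Submodule.inner_right_of_mem_orthogonal (Submodule.orthogonalProjectionOnto W₁ f).2 hfp)
    rw [add_sub_cancel] at h
    rw [pow_two, pow_two, pow_two]; exact h
  have h2 : ‖(Submodule.orthogonalProjectionOnto W₂ f : H)‖ ^ 2 = ‖f - p₁‖ ^ 2 + ‖⟪b 0, f⟫ • b 0‖ ^ 2 := by
    rw [proj_W₂ b hb hbspan W₁ W₂ hW₁ hW₂ f]
    have h := norm_add_sq_eq_norm_sq_add_norm_sq_of_inner_eq_zero (𝕜 := ℂ) (f - p₁) (⟪b 0, f⟫ • b 0)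
      (by rw [inner_smul_right,
        Submodule.inner_left_of_mem_orthogonal (mem_W₁ b W₁ hW₁ (le_refl (0:ℤ))) hfp, mul_zero])
    rw [pow_two, pow_two, pow_two]; exact h
  have h3 : ‖⟪b 0, f⟫ • b 0‖ = ‖⟪b 0, f⟫‖ := by
    rw [norm_smul, hb.1 0, mul_one]
  rw [h2, h3, h1]; ring

end Main

/-- for `W₁ = span{e i : i ≥ 0}`, `W₂ = span{e i : i ≤ 0}` and a
weight `ω > 0`, `W = {(W₁, ω), (W₂, ω)}` is a fusion frame, its fusion frame
operator satisfies `S_W⁻¹ f = ω⁻²(f − ⟨f, e₀⟩ e₀ / 2)`, and `e(W) = 1`. -/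
theorem fusionFrame_two_halfspaces_excess_one
    {H : Type} [NormedAddCommGroup H] [InnerProductSpace ℂ H] [CompleteSpace H]
    (b : ℤ → H) (hb : Orthonormal ℂ b)
    (hbspan : (Submodule.span ℂ (Set.range b)).topologicalClosure = ⊤)
    (W₁ W₂ : Submodule ℂ H) [CompleteSpace W₁] [CompleteSpace W₂]
    (hW₁ : W₁ = (Submodule.span ℂ (b '' {i : ℤ | 0 ≤ i})).topologicalClosure)
    (hW₂ : W₂ = (Submodule.span ℂ (b '' {i : ℤ | i ≤ 0})).topologicalClosure)
    (ω : ℝ) (hω : 0 < ω)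
    -- synthesis operator of `W = {(W₁, ω), (W₂, ω)}`:
    (T : (W₁ × W₂) →L[ℂ] H)
    (hT : ∀ p : W₁ × W₂, T p = ω • (p.1 : H) + ω • (p.2 : H)) :
    -- `W` is a fusion frame:
    (∃ A B : ℝ, 0 < A ∧ A ≤ B ∧ ∀ f : H,
      (A * ‖f‖ ^ 2 ≤ ω ^ 2 * ‖(Submodule.orthogonalProjectionOnto W₁ f : H)‖ ^ 2 +
          ω ^ 2 * ‖(Submodule.orthogonalProjectionOnto W₂ f : H)‖ ^ 2) ∧
      (ω ^ 2 * ‖(Submodule.orthogonalProjectionOnto W₁ f : H)‖ ^ 2 +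
          ω ^ 2 * ‖(Submodule.orthogonalProjectionOnto W₂ f : H)‖ ^ 2 ≤ B * ‖f‖ ^ 2)) ∧
    -- `f ↦ ω⁻²(f − ⟨f, e₀⟩ e₀ / 2)` is a two-sided inverse of `S_W`:
    (∀ f : H,
      (ω ^ 2 • (Submodule.orthogonalProjectionOnto W₁
          ((ω ^ 2)⁻¹ • (f - ((inner ℂ (b 0) f : ℂ) / 2) • b 0)) : H) +
        ω ^ 2 • (Submodule.orthogonalProjectionOnto W₂
          ((ω ^ 2)⁻¹ • (f - ((inner ℂ (b 0) f : ℂ) / 2) • b 0)) : H) = f) ∧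
      ((ω ^ 2)⁻¹ • ((ω ^ 2 • (Submodule.orthogonalProjectionOnto W₁ f : H) +
            ω ^ 2 • (Submodule.orthogonalProjectionOnto W₂ f : H)) -
          ((inner ℂ (b 0) (ω ^ 2 • (Submodule.orthogonalProjectionOnto W₁ f : H) +
            ω ^ 2 • (Submodule.orthogonalProjectionOnto W₂ f : H)) : ℂ) / 2) • b 0) = f)) ∧
    -- the excess of `W` equals 1:
    Module.rank ℂ (LinearMap.ker (T : (W₁ × W₂) →ₗ[ℂ] H)) = 1 := by
  have hb00 : ⟪b 0, b 0⟫ = 1 := by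
    have := hb.1 0
    rw [@inner_self_eq_norm_sq_to_K ℂ, this]; norm_num
  have hsum := proj_sum b hb hbspan W₁ W₂ hW₁ hW₂
  have hrs : ∀ (r : ℝ) (x : H), r • x = (r : ℂ) • x := fun r x =>
    RCLike.real_smul_eq_coe_smul (K := ℂ) r x
  have hw0 : ((ω ^ 2 : ℝ) : ℂ) ≠ 0 := by
    simp only [ne_eq, Complex.ofReal_eq_zero]
    positivity
  refine ⟨⟨ω ^ 2, 2 * ω ^ 2, by positivity, by nlinarith, fun f => ?_⟩, fun f => ⟨?_, ?_⟩, ?_⟩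
  · have hn := norm_sq_sum b hb hbspan W₁ W₂ hW₁ hW₂ f
    have hcle : ‖⟪b 0, f⟫‖ ≤ ‖f‖ := by
      have := norm_inner_le_norm (𝕜 := ℂ) (b 0) f
      rwa [hb.1 0, one_mul] at this
    have hc2 : ‖⟪b 0, f⟫‖ ^ 2 ≤ ‖f‖ ^ 2 := by
      nlinarith [norm_nonneg (⟪b 0, f⟫ : ℂ)]
    constructor
    · nlinarith [sq_nonneg ‖⟪b 0, f⟫‖, sq_nonneg ω]
    · nlinarith [sq_nonneg ω]
  · -- left inverse
    have hwc : (ω : ℂ) ≠ 0 := by simp [hω.ne']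
    have key := hsum ((ω ^ 2)⁻¹ • (f - (⟪b 0, f⟫ / 2) • b 0))
    simp only [hrs] at key ⊢
    rw [← smul_add, key]
    have hcg : ⟪b 0, ((((ω ^ 2)⁻¹ : ℝ)) : ℂ) • (f - (⟪b 0, f⟫ / 2) • b 0)⟫
        = (((ω ^ 2)⁻¹ : ℝ) : ℂ) * (⟪b 0, f⟫ / 2) := by
      rw [inner_smul_right, inner_sub_right, inner_smul_right, hb00, mul_one]; ring
    rw [hcg]
    match_scalars <;> (push_cast; field_simp [hwc]) <;> try ring
  · -- right inverse
    have hwc : (ω : ℂ) ≠ 0 := by simp [hω.ne']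
    simp only [hrs]
    rw [← smul_add, hsum f]
    have hc2 : ⟪b 0, ((ω ^ 2 : ℝ) : ℂ) • (f + ⟪b 0, f⟫ • b 0)⟫
        = ((ω ^ 2 : ℝ) : ℂ) * (2 * ⟪b 0, f⟫) := by
      rw [inner_smul_right, inner_add_right, inner_smul_right, hb00, mul_one]
      ring
    rw [hc2]
    match_scalars <;> (push_cast; field_simp [hwc]) <;> try ring
  · -- excess = 1
    have hinter : ∀ h : H, h ∈ W₁ → h ∈ W₂ → h = ⟪b 0, h⟫ • b 0 := by
      intro h h1 h2
      have hz : h - ⟪b 0, h⟫ • b 0 = 0 := by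
        refine zero_of_orth hbspan fun i => ?_
        rcases lt_trichotomy i 0 with hi | rfl | hi
        · rw [inner_sub_right, orth_W₁ b hb W₁ hW₁ hi h1, inner_smul_right,
            hb.2 (show i ≠ 0 by omega), mul_zero, sub_zero]
        · rw [inner_sub_right, inner_smul_right, hb00, mul_one, sub_self]
        · rw [inner_sub_right, orth_W₂ b hb W₂ hW₂ hi h2, inner_smul_right,
            hb.2 (show i ≠ 0 by omega), mul_zero, sub_zero]
      exact sub_eq_zero.1 hz
    set v₀ : W₁ × W₂ := (⟨b 0, mem_W₁ b W₁ hW₁ le_rfl⟩, ⟨-(b 0), W₂.neg_mem (mem_W₂ b W₂ hW₂ le_rfl)⟩)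
      with hv₀def
    have hb0ne : b 0 ≠ 0 := by
      intro h
      have := hb.1 0
      rw [h, norm_zero] at this
      norm_num at this
    have hv₀ : v₀ ≠ 0 := by
      intro h
      exact hb0ne (congrArg (fun p => (p.1 : H)) h)
    have hker : LinearMap.ker (T : (W₁ × W₂) →ₗ[ℂ] H) = Submodule.span ℂ {v₀} := by
      ext p
      rw [LinearMap.mem_ker, Submodule.mem_span_singleton]
      constructor
      · intro hp
        rw [ContinuousLinearMap.coe_coe, hT] at hp
        have hps : (p.1 : H) = -(p.2 : H) := by
          have h1 : ω • ((p.1 : H) + (p.2 : H)) = 0 := by rw [smul_add]; exact hp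
          have h2 : ((p.1 : H) + (p.2 : H)) = 0 := by
            rcases smul_eq_zero.1 h1 with h | h
            · exact absurd h hω.ne'
            · exact h
          linear_combination (norm := abel) h2
        have hp1W₂ : (p.1 : H) ∈ W₂ := hps ▸ W₂.neg_mem p.2.2
        refine ⟨⟪b 0, (p.1 : H)⟫, ?_⟩
        have hp1 : (p.1 : H) = ⟪b 0, (p.1 : H)⟫ • b 0 := hinter _ p.1.2 hp1W₂
        refine Prod.ext (Subtype.ext ?_) (Subtype.ext ?_)
        · exact hp1.symm
        · show ⟪b 0, (p.1 : H)⟫ • -(b 0) = (p.2 : H)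
          rw [smul_neg, ← hp1, hps, neg_neg]
      · rintro ⟨a, rfl⟩
        rw [ContinuousLinearMap.coe_coe, hT]
        show ω • (a • b 0) + ω • (a • -(b 0)) = 0
        rw [smul_neg, smul_neg]
        abel
    rw [hker]
    rw [← (LinearEquiv.toSpanNonzeroSingleton ℂ _ v₀ hv₀).rank_eq]
    exact Module.rank_self ℂ
end
end

section
/- Let W = {(W_i, ω_i)}_{i∈I} be a fusion frame for a finite-dimensional Hilbert space H_n with a Q_A-dual fusion frame V = {(V_i, υ_i)}_{i∈I}, where A is a bounded left inverse of T_W*. Then |e(V) − e(W)| = |Σ_{i∈I} dim(V_i ∩ N(p_i A*)) − Σ_{i∈I} dim N(A p_i*)|, where p_i : ⊕_k W_k → W_i is the coordinate projection. -/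
noncomputable section
open scoped ENNReal

/-- The coordinate projection `p i : ⊕ₖ W k → W i`. -/
def coordProj {H : Type} [NormedAddCommGroup H] [InnerProductSpace ℂ H]
    {ι : Type} (W : ι → Submodule ℂ H) (i : ι) :
    PiLp 2 (fun k => ↥(W k)) →ₗ[ℂ] ↥(W i) :=
  (LinearMap.proj i).comp (WithLp.linearEquiv 2 ℂ (∀ k, ↥(W k))).toLinearMap

/-- The coordinate inclusion `p i * : W i → ⊕ₖ W k`. -/
def coordIncl {H : Type} [NormedAddCommGroup H] [InnerProductSpace ℂ H]
    {ι : Type} [DecidableEq ι] (W : ι → Submodule ℂ H) (i : ι) :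
    ↥(W i) →ₗ[ℂ] PiLp 2 (fun k => ↥(W k)) :=
  ((WithLp.linearEquiv 2 ℂ (∀ k, ↥(W k))).symm.toLinearMap).comp
    (LinearMap.single ℂ (fun k => ↥(W k)) i)

/-- Auxiliary: kernel of an adjoint is the orthogonal complement of the range. -/
lemma ker_adjoint_eq_orthogonal_range {E F : Type} [NormedAddCommGroup E]
    [InnerProductSpace ℂ E] [NormedAddCommGroup F] [InnerProductSpace ℂ F]
    [FiniteDimensional ℂ E] [FiniteDimensional ℂ F] (B : E →L[ℂ] F) :
    LinearMap.ker (ContinuousLinearMap.adjoint B).toLinearMap = (LinearMap.range B.toLinearMap)ᗮ := by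
  ext f
  simp only [LinearMap.mem_ker, Submodule.mem_orthogonal, ContinuousLinearMap.coe_coe]
  constructor
  · rintro h _ ⟨x, rfl⟩
    rw [ContinuousLinearMap.coe_coe, ← ContinuousLinearMap.adjoint_inner_right]
    simp [h]
  · intro h
    rw [← inner_self_eq_zero (𝕜 := ℂ), ContinuousLinearMap.adjoint_inner_right]
    exact h _ ⟨_, rfl⟩

/-- Auxiliary: inner product against a coordinate inclusion. -/
lemma inner_coordIncl {H : Type} [NormedAddCommGroup H] [InnerProductSpace ℂ H]
    {ι : Type} [Fintype ι] [DecidableEq ι] (W : ι → Submodule ℂ H) (i : ι)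
    (x : W i) (g : PiLp 2 (fun k => ↥(W k))) :
    inner ℂ (coordIncl W i x) g = (inner ℂ x (g i) : ℂ) := by
  rw [PiLp.inner_apply, Finset.sum_eq_single i]
  · simp [coordIncl]
  · intro k _ hk
    simp [coordIncl, Pi.single_eq_of_ne hk]
  · simp

lemma coordIncl_apply_self {H : Type} [NormedAddCommGroup H] [InnerProductSpace ℂ H]
    {ι : Type} [DecidableEq ι] (W : ι → Submodule ℂ H) (i : ι) (x : W i) :
    ((coordIncl W i x : ∀ k, ↥(W k)) i) = x := by
  simp [coordIncl]

set_option maxHeartbeats 1600000 in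
/-- for a `Q_A`-dual fusion frame `V` of `W` in `H_n`,
`|e(V) − e(W)| = |∑ᵢ dim (V i ∩ N(pᵢ A*)) − ∑ᵢ dim N(A pᵢ*)|`. -/
theorem abs_excess_sub_excess_Qdual
    {H : Type} [NormedAddCommGroup H] [InnerProductSpace ℂ H]
    [FiniteDimensional ℂ H]
    {ι : Type} [Fintype ι] [DecidableEq ι]
    (W V : ι → Submodule ℂ H) (ω υ : ι → ℝ)
    (hW : IsFusionFrame W ω) (hV : IsFusionFrame V υ)
    -- synthesis operators:
    (TW : PiLp 2 (fun i => ↥(W i)) →L[ℂ] H)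
    (hTW : ∀ g : PiLp 2 (fun i => ↥(W i)), TW g = ∑ i, ω i • ((g i : H)))
    (TV : PiLp 2 (fun i => ↥(V i)) →L[ℂ] H)
    (hTV : ∀ g : PiLp 2 (fun i => ↥(V i)), TV g = ∑ i, υ i • ((g i : H)))
    -- `A` is a bounded left inverse of the analysis operator `T_W*`:
    (A : PiLp 2 (fun i => ↥(W i)) →L[ℂ] H)
    (hA : ∀ h : H, A (ContinuousLinearMap.adjoint TW h) = h)
    -- `A Mᵢ (⊕ W) ⊆ V i`, so that `Q_A {f j} = {υ i⁻¹ A (Mᵢ {f j})}ᵢ` maps into `⊕ V i`: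
    (hrange : ∀ (i : ι) (g : PiLp 2 (fun k => ↥(W k))),
      A (coordIncl W i ((g : ∀ k, ↥(W k)) i)) ∈ V i)
    -- `V` is the `Q_A`-dual: `T_V Q_A T_W* = I`:
    (hdual : ∀ h : H,
      ∑ i, A (coordIncl W i ((ContinuousLinearMap.adjoint TW h : ∀ k, ↥(W k)) i)) = h) :
    ((Module.finrank ℂ (LinearMap.ker TV.toLinearMap) : ℤ) -
        (Module.finrank ℂ (LinearMap.ker TW.toLinearMap) : ℤ)).natAbs =
      ((∑ i, (Module.finrank ℂ
          ↥(V i ⊓ LinearMap.ker ((coordProj W i).comp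
            (ContinuousLinearMap.adjoint A).toLinearMap)) : ℤ)) -
        ∑ i, (Module.finrank ℂ
          ↥(LinearMap.ker (A.toLinearMap.comp (coordIncl W i))) : ℤ)).natAbs := by
  classical
  obtain ⟨hυpos, -⟩ := hV
  set n := Module.finrank ℂ H with hn
  -- the per-index operator `Bᵢ = A ∘ pᵢ*`
  set B : ∀ i : ι, ↥(W i) →ₗ[ℂ] H := fun i => A.toLinearMap.comp (coordIncl W i) with hB
  -- its range lies in `V i`
  have hrangeB : ∀ i, LinearMap.range (B i) ≤ V i := by
    rintro i _ ⟨x, rfl⟩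
    have := hrange i (coordIncl W i x)
    rwa [coordIncl_apply_self] at this
  -- kernel of `pᵢ ∘ A*` is the orthogonal complement of the range of `Bᵢ`
  have hker : ∀ i, LinearMap.ker ((coordProj W i).comp
      (ContinuousLinearMap.adjoint A).toLinearMap) = (LinearMap.range (B i))ᗮ := by
    intro i
    ext f
    simp only [LinearMap.mem_ker, LinearMap.comp_apply, Submodule.mem_orthogonal,
      ContinuousLinearMap.coe_coe]
    constructor
    · rintro h _ ⟨x, rfl⟩
      have : (inner ℂ (A (coordIncl W i x)) f : ℂ)
          = inner ℂ x ((ContinuousLinearMap.adjoint A f : ∀ k, ↥(W k)) i) := by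
        rw [← ContinuousLinearMap.adjoint_inner_right, inner_coordIncl]
      simp only [hB, LinearMap.comp_apply, ContinuousLinearMap.coe_coe]
      rw [this]
      have h0 : ((ContinuousLinearMap.adjoint A f : ∀ k, ↥(W k)) i) = 0 := h
      rw [h0, inner_zero_right]
    · intro h
      have key : ∀ x : ↥(W i),
          (inner ℂ x ((ContinuousLinearMap.adjoint A f : ∀ k, ↥(W k)) i) : ℂ) = 0 := by
        intro x
        rw [← inner_coordIncl, ContinuousLinearMap.adjoint_inner_right]
        exact h _ ⟨x, rfl⟩
      have := key ((ContinuousLinearMap.adjoint A f : ∀ k, ↥(W k)) i)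
      rw [inner_self_eq_zero] at this
      exact this
  -- dimension identity for each `V i`
  have hVi : ∀ i, Module.finrank ℂ (LinearMap.range (B i)) +
      Module.finrank ℂ ↥(V i ⊓ LinearMap.ker ((coordProj W i).comp
        (ContinuousLinearMap.adjoint A).toLinearMap)) = Module.finrank ℂ ↥(V i) := by
    intro i
    rw [hker i, inf_comm]
    exact Submodule.finrank_add_inf_finrank_orthogonal (hrangeB i)
  -- rank-nullity for each `Bᵢ`
  have hWi : ∀ i, Module.finrank ℂ (LinearMap.range (B i)) +
      Module.finrank ℂ ↥(LinearMap.ker (A.toLinearMap.comp (coordIncl W i)))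
      = Module.finrank ℂ ↥(W i) := by
    intro i
    exact LinearMap.finrank_range_add_finrank_ker (B i)
  -- total dimensions of the direct sums
  have hNW : Module.finrank ℂ (PiLp 2 (fun k => ↥(W k))) = ∑ i, Module.finrank ℂ ↥(W i) := by
    rw [(WithLp.linearEquiv 2 ℂ (∀ k, ↥(W k))).finrank_eq]
    exact Module.finrank_pi_fintype ℂ
  have hNV : Module.finrank ℂ (PiLp 2 (fun k => ↥(V k))) = ∑ i, Module.finrank ℂ ↥(V i) := by
    rw [(WithLp.linearEquiv 2 ℂ (∀ k, ↥(V k))).finrank_eq]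
    exact Module.finrank_pi_fintype ℂ
  -- excess of W : `n + dim ker TW = ∑ dim W i`
  have hTWadj_inj : Function.Injective (ContinuousLinearMap.adjoint TW) :=
    Function.LeftInverse.injective (g := A) hA
  have hrangeadj : Module.finrank ℂ (LinearMap.range (ContinuousLinearMap.adjoint TW).toLinearMap) = n :=
    LinearMap.finrank_range_of_inj hTWadj_inj
  have hkerTW : LinearMap.ker TW.toLinearMap = (LinearMap.range (ContinuousLinearMap.adjoint TW).toLinearMap)ᗮ := by
    conv_lhs => rw [← ContinuousLinearMap.adjoint_adjoint TW]
    exact ker_adjoint_eq_orthogonal_range _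
  have hWtot : n + Module.finrank ℂ (LinearMap.ker TW.toLinearMap) = ∑ i, Module.finrank ℂ ↥(W i) := by
    rw [hkerTW, ← hrangeadj, ← hNW]
    exact Submodule.finrank_add_finrank_orthogonal _
  -- TV is surjective
  have hTVsurj : Function.Surjective TV := by
    intro h
    refine ⟨(WithLp.equiv 2 _).symm (fun i => (((υ i)⁻¹ : ℝ) •
      (⟨_, hrange i (ContinuousLinearMap.adjoint TW h)⟩ : ↥(V i)))), ?_⟩
    rw [hTV]
    have step : (∑ i, υ i • ((((WithLp.equiv 2 _).symm (fun i => (((υ i)⁻¹ : ℝ) •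
        (⟨_, hrange i (ContinuousLinearMap.adjoint TW h)⟩ : ↥(V i))))) i : ↥(V i)) : H))
        = ∑ i, A (coordIncl W i ((ContinuousLinearMap.adjoint TW h : ∀ k, ↥(W k)) i)) := by
      refine Finset.sum_congr rfl fun i _ => ?_
      show υ i • ((((υ i)⁻¹ : ℝ) •
          (⟨_, hrange i (ContinuousLinearMap.adjoint TW h)⟩ : ↥(V i)) : ↥(V i)) : H)
          = A (coordIncl W i ((ContinuousLinearMap.adjoint TW h : ∀ k, ↥(W k)) i))
      rw [Submodule.coe_smul_of_tower, smul_smul, mul_inv_cancel₀ (hυpos i).ne', one_smul]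
    rw [step, hdual h]
  have hrangeTV : Module.finrank ℂ (LinearMap.range TV.toLinearMap) = n := by
    rw [LinearMap.range_eq_top.mpr hTVsurj]
    exact finrank_top ℂ H
  have hVtot : n + Module.finrank ℂ (LinearMap.ker TV.toLinearMap) = ∑ i, Module.finrank ℂ ↥(V i) := by
    rw [← hrangeTV, ← hNV]
    exact LinearMap.finrank_range_add_finrank_ker (TV : PiLp 2 (fun k => ↥(V k)) →ₗ[ℂ] H)
  -- finish by arithmetic
  have hVsum : (∑ i, Module.finrank ℂ (LinearMap.range (B i))) +
      ∑ i, Module.finrank ℂ ↥(V i ⊓ LinearMap.ker ((coordProj W i).comp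
        (ContinuousLinearMap.adjoint A).toLinearMap)) = ∑ i, Module.finrank ℂ ↥(V i) := by
    rw [← Finset.sum_add_distrib]
    exact Finset.sum_congr rfl fun i _ => hVi i
  have hWsum : (∑ i, Module.finrank ℂ (LinearMap.range (B i))) +
      ∑ i, Module.finrank ℂ ↥(LinearMap.ker (A.toLinearMap.comp (coordIncl W i)))
      = ∑ i, Module.finrank ℂ ↥(W i) := by
    rw [← Finset.sum_add_distrib]
    exact Finset.sum_congr rfl fun i _ => hWi i
  push_cast [← Nat.cast_sum] at hVtot hWtot hVsum hWsum ⊢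
  omega
end
end

section
/- Let W = {(W_i, ω_i)}_{i∈I} be a fusion Riesz basis for a finite-dimensional Hilbert space H_n and V = {(V_i, ω_i)}_{i∈I} a Gavruta dual fusion frame of W (equivalently, V_i ⊇ S_W^{-1} W_i for all i). Then e(V) = Σ_{i∈I} dim(V_i ∩ S_W W_i⊥); in particular 0 ≤ e(V) ≤ Σ_{i∈I} dim W_i⊥. -/
noncomputable section
open scoped ENNReal

lemma aux_finrank_eq_add_inf_orthogonal {H : Type} [NormedAddCommGroup H]
    [InnerProductSpace ℂ H] [FiniteDimensional ℂ H] (K V : Submodule ℂ H) (hKV : K ≤ V) :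
    Module.finrank ℂ V = Module.finrank ℂ K + Module.finrank ℂ ↥(V ⊓ Kᗮ) := by
  have hsup : K ⊔ (V ⊓ Kᗮ) = V := by
    refine le_antisymm (sup_le hKV inf_le_left) ?_
    intro v hv
    have h1 : (Submodule.orthogonalProjectionOnto K v : H) ∈ K := (Submodule.orthogonalProjectionOnto K v).2
    have h2 : v - Submodule.orthogonalProjectionOnto K v ∈ Kᗮ :=
      K.sub_starProjection_mem_orthogonal v
    have h3 : v - Submodule.orthogonalProjectionOnto K v ∈ V := V.sub_mem hv (hKV h1)
    have hv' : v = (Submodule.orthogonalProjectionOnto K v : H) + (v - Submodule.orthogonalProjectionOnto K v) := by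
      abel
    rw [hv']
    exact Submodule.add_mem_sup h1 (Submodule.mem_inf.mpr ⟨h3, h2⟩)
  have hinf : K ⊓ (V ⊓ Kᗮ) = ⊥ := by
    rw [eq_bot_iff, ← K.inf_orthogonal_eq_bot]
    exact inf_le_inf_left K inf_le_right
  have h := Submodule.finrank_sup_add_finrank_inf_eq K (V ⊓ Kᗮ)
  rw [hsup, hinf] at h
  simpa using h

/-- if `W` is a fusion Riesz basis of `H_n` and `V` is a Gavruta
dual fusion frame of `W` (with the same weights), then
`e(V) = ∑ᵢ dim (V i ∩ S_W (W i)ᗮ)`, and in particular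
`0 ≤ e(V) ≤ ∑ᵢ dim (W i)ᗮ`. -/
theorem excess_GavrutaDual_of_fusionRieszBasis
    {H : Type} [NormedAddCommGroup H] [InnerProductSpace ℂ H]
    [FiniteDimensional ℂ H]
    {ι : Type} [Fintype ι]
    (W V : ι → Submodule ℂ H) (ω : ι → ℝ)
    (hW : IsFusionRieszBasis W ω)
    (hVframe : IsFusionFrame V ω)
    -- the (invertible) fusion frame operator of `W`:
    (S : H ≃L[ℂ] H)
    (hS : ∀ f : H, S f = ∑ i, ω i ^ 2 • (Submodule.orthogonalProjectionOnto (W i) f : H))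
    -- `V` is a Gavruta dual of `W`: `f = ∑ᵢ ω i ω i π_{V i} S_W⁻¹ π_{W i} f`:
    (hdual : ∀ f : H,
      ∑ i, (ω i * ω i) •
        (Submodule.orthogonalProjectionOnto (V i)
          (S.symm ((Submodule.orthogonalProjectionOnto (W i) f : H))) : H) = f)
    -- synthesis operator of `V`:
    (TV : PiLp 2 (fun i => ↥(V i)) →L[ℂ] H)
    (hTV : ∀ g : PiLp 2 (fun i => ↥(V i)), TV g = ∑ i, ω i • ((g i : H))) :
    Module.finrank ℂ (LinearMap.ker (TV : PiLp 2 (fun i => ↥(V i)) →ₗ[ℂ] H)) =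
        ∑ i, Module.finrank ℂ ↥(V i ⊓ ((W i)ᗮ).map (S : H →ₗ[ℂ] H)) ∧
      Module.finrank ℂ (LinearMap.ker (TV : PiLp 2 (fun i => ↥(V i)) →ₗ[ℂ] H)) ≤ ∑ i, Module.finrank ℂ ↥((W i)ᗮ) := by
  classical
  obtain ⟨hωpos, hWtop, C, D, hC, _, hRiesz⟩ := hW
  have hωne : ∀ i, ω i ≠ 0 := fun i => (hωpos i).ne'
  -- the synthesis operator of W
  set Tw : (∀ i, W i) →ₗ[ℂ] H :=
    { toFun := fun g => ∑ i, ω i • (g i : H)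
      map_add' := by intro a b; simp [smul_add, Finset.sum_add_distrib]
      map_smul' := by intro c a; simp [smul_comm (ω _) c, Finset.smul_sum] } with hTw
  have hTwinj : Function.Injective Tw := by
    rw [injective_iff_map_eq_zero]
    intro g hg
    have h := (hRiesz Finset.univ g).1
    have hz : ∑ j, ω j • (g j : H) = 0 := hg
    rw [hz] at h
    simp only [norm_zero] at h
    have hle : ∑ j, ‖(g j : H)‖ ^ 2 ≤ 0 := by nlinarith
    have hz' : ∀ j, (g j : H) = 0 := by
      intro j
      have h0 : ‖(g j : H)‖ ^ 2 ≤ 0 := by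
        refine le_trans ?_ hle
        exact Finset.single_le_sum (f := fun i => ‖(g i : H)‖ ^ 2) (fun i _ => sq_nonneg _)
          (Finset.mem_univ j)
      have : ‖(g j : H)‖ ^ 2 = 0 := le_antisymm h0 (sq_nonneg _)
      simpa [pow_eq_zero_iff] using this
    funext j
    exact Subtype.ext (hz' j)
  have htop : (⨆ i, W i) = ⊤ :=
    ((Submodule.closed_of_finiteDimensional _).submodule_topologicalClosure_eq).symm.trans hWtop
  have hTwsurj : Function.Surjective Tw := by
    rw [← LinearMap.range_eq_top]
    have hsup : ⨆ i, W i ≤ LinearMap.range Tw := by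
      refine iSup_le fun i w hw => ?_
      refine ⟨Pi.single i ((ω i)⁻¹ • ⟨w, hw⟩), ?_⟩
      show ∑ j, ω j • ((Pi.single i ((ω i)⁻¹ • (⟨w, hw⟩ : W i)) : ∀ k, W k) j : H) = w
      rw [Finset.sum_eq_single i]
      · rw [Pi.single_eq_same]
        simp [smul_smul, mul_inv_cancel₀ (hωne i)]
      · intro j _ hj
        rw [Pi.single_eq_of_ne hj]
        simp
      · intro h; exact absurd (Finset.mem_univ i) h
    exact top_unique (htop ▸ hsup)
  have hdimW : ∑ i, Module.finrank ℂ (W i) = Module.finrank ℂ H :=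
    ((Module.finrank_pi_fintype ℂ).symm.trans
      (LinearEquiv.ofBijective Tw ⟨hTwinj, hTwsurj⟩).finrank_eq)
  -- the analysis operator of W is surjective
  set Aw : H →ₗ[ℂ] ∀ i, W i :=
    { toFun := fun f i => ω i • Submodule.orthogonalProjectionOnto (W i) f
      map_add' := by intro a b; funext i; simp [smul_add]
      map_smul' := by intro c a; funext i; simp [smul_comm (ω _) c] } with hAw
  have hAwinj : Function.Injective Aw := by
    rw [injective_iff_map_eq_zero]
    intro f hf
    have hz : ∀ i, f ∈ (W i)ᗮ := by
      intro i
      have h1 := congrFun hf i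
      have h2 : ω i • Submodule.orthogonalProjectionOnto (W i) f = 0 := h1
      have h3 : Submodule.orthogonalProjectionOnto (W i) f = 0 := by
        rcases smul_eq_zero.mp h2 with h | h
        · exact absurd h (hωne i)
        · exact h
      exact Submodule.orthogonalProjectionOnto_eq_zero_iff.mp h3
    have hmem : f ∈ (⨆ i, W i)ᗮ := by
      rw [← Submodule.iInf_orthogonal]
      exact Submodule.mem_iInf _ |>.mpr hz
    rw [htop, Submodule.top_orthogonal_eq_bot] at hmem
    simpa using hmem
  have hAwsurj : Function.Surjective Aw := by
    have h1 : Module.finrank ℂ H = Module.finrank ℂ (∀ i, W i) := by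
      rw [Module.finrank_pi_fintype ℂ, hdimW]
    exact (LinearMap.injective_iff_surjective_of_finrank_eq_finrank h1).mp hAwinj
  -- Gavruta duality forces `S⁻¹ W i ⊆ V i`
  have hRsmul : ∀ (r : ℝ) (v : H), S.symm (r • v) = r • S.symm v := fun r v => by
    rw [← algebraMap_smul ℂ r v, map_smul, algebraMap_smul]
  have hSinv : ∀ j, (W j).map (S.symm : H →ₗ[ℂ] H) ≤ V j := by
    intro j x hx
    obtain ⟨w, hw, rfl⟩ := hx
    obtain ⟨f, hf⟩ := hAwsurj (Pi.single j (⟨w, hw⟩ : W j))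
    have hfi : ∀ i, ω i • ((Submodule.orthogonalProjectionOnto (W i) f : H)) =
        (((Pi.single j (⟨w, hw⟩ : W j) : ∀ k, W k)) i : H) := by
      intro i
      have h2 := congrArg (fun z : W i => (z : H)) (congrFun hf i)
      simpa [hAw] using h2
    have hne : ∀ i, i ≠ j → (Submodule.orthogonalProjectionOnto (W i) f : H) = 0 := by
      intro i hij
      have := hfi i
      rw [Pi.single_eq_of_ne hij] at this
      simpa [hωne i, smul_eq_zero] using this
    have hj' : (Submodule.orthogonalProjectionOnto (W j) f : H) = (ω j)⁻¹ • w := by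
      have h2 := hfi j
      rw [Pi.single_eq_same] at h2
      rw [eq_inv_smul_iff₀ (hωne j)]
      exact h2
    have hPsmul : ∀ (r : ℝ) (v : H),
        ((Submodule.orthogonalProjectionOnto (V j) (r • v) : H)) = r • (Submodule.orthogonalProjectionOnto (V j) v : H) := by
      intro r v
      rw [← algebraMap_smul ℂ r v, map_smul, Submodule.coe_smul, algebraMap_smul]
    have hf_eq : f = ω j • (Submodule.orthogonalProjectionOnto (V j) (S.symm w) : H) := by
      have hd := hdual f
      have hsum : ∑ i, (ω i * ω i) •
          (Submodule.orthogonalProjectionOnto (V i) (S.symm ((Submodule.orthogonalProjectionOnto (W i) f : H))) : H)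
          = ω j • (Submodule.orthogonalProjectionOnto (V j) (S.symm w) : H) := by
        rw [Finset.sum_eq_single j]
        · rw [hj', hRsmul, hPsmul, smul_smul]
          congr 1
          field_simp
        · intro i _ hij
          rw [hne i hij]
          simp
        · intro h; exact absurd (Finset.mem_univ j) h
      exact hd.symm.trans hsum
    have hSf : S f = ω j • w := by
      rw [hS f, Finset.sum_eq_single j]
      · rw [hj', smul_smul]
        congr 1
        rw [pow_two]
        field_simp
      · intro i _ hij
        rw [hne i hij]
        simp
      · intro h; exact absurd (Finset.mem_univ j) h
    have hfval : f = ω j • S.symm w := by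
      rw [← hRsmul, ← hSf, S.symm_apply_apply]
    have hmem : f ∈ V j := by
      rw [hf_eq]
      exact Submodule.smul_of_tower_mem _ _ (Submodule.orthogonalProjectionOnto (V j) (S.symm w)).2
    have hfin : S.symm w = (ω j)⁻¹ • f := by
      rw [hfval, inv_smul_smul₀ (hωne j)]
    show (S.symm : H →ₗ[ℂ] H) w ∈ V j
    have hco : (S.symm : H →ₗ[ℂ] H) w = S.symm w := by simp
    rw [hco, hfin]
    exact Submodule.smul_of_tower_mem _ _ hmem
  -- S and S.symm are self-adjoint
  have hSsa : ∀ x y : H, (inner ℂ (S x) y : ℂ) = inner ℂ x (S y) := by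
    intro x y
    rw [hS x, hS y, sum_inner, inner_sum]
    refine Finset.sum_congr rfl fun i _ => ?_
    rw [← algebraMap_smul ℂ (ω i ^ 2) ((Submodule.orthogonalProjectionOnto (W i) x : H)),
      ← algebraMap_smul ℂ (ω i ^ 2) ((Submodule.orthogonalProjectionOnto (W i) y : H)),
      inner_smul_left, inner_smul_right, ← Submodule.starProjection_apply,
        ← Submodule.starProjection_apply, Submodule.inner_starProjection_left_eq_right]
    congr 1
    simp [Complex.conj_ofReal]
  have hSsymmsa : ∀ x y : H, (inner ℂ (S.symm x) y : ℂ) = inner ℂ x (S.symm y) := by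
    intro x y
    have := (hSsa (S.symm x) (S.symm y)).symm
    simpa using this
  have horth : ∀ j, ((W j).map (S.symm : H →ₗ[ℂ] H))ᗮ = ((W j)ᗮ).map (S : H →ₗ[ℂ] H) := by
    intro j
    ext x
    simp only [Submodule.mem_orthogonal, Submodule.mem_map, ContinuousLinearEquiv.coe_coe,
      ContinuousLinearMap.coe_coe]
    constructor
    · intro h
      refine ⟨S.symm x, fun w hw => ?_, by simp⟩
      rw [← hSsymmsa w x]
      exact h (S.symm w) ⟨w, hw, by simp⟩
    · rintro ⟨y, hy, rfl⟩ u ⟨w, hw, rfl⟩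
      have : (inner ℂ (S.symm w) (S y) : ℂ) = inner ℂ w y := by
        rw [hSsymmsa]
        simp
      simpa [this] using hy w hw
  have hdimV : ∀ j, Module.finrank ℂ (V j) =
      Module.finrank ℂ (W j) + Module.finrank ℂ ↥(V j ⊓ ((W j)ᗮ).map (S : H →ₗ[ℂ] H)) := by
    intro j
    have h := aux_finrank_eq_add_inf_orthogonal ((W j).map (S.symm : H →ₗ[ℂ] H)) (V j) (hSinv j)
    rw [horth j] at h
    rw [h]
    congr 1
    exact (LinearEquiv.finrank_map_eq S.symm.toLinearEquiv (W j)).trans rfl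
  -- TV is surjective
  have hTVsurj : Function.Surjective TV := by
    intro f
    refine ⟨WithLp.toLp 2 (fun i => ω i • Submodule.orthogonalProjectionOnto (V i) (S.symm (Submodule.orthogonalProjectionOnto (W i) f))), ?_⟩
    rw [hTV]
    simpa [smul_smul] using hdual f
  -- rank-nullity
  have hrn := LinearMap.finrank_range_add_finrank_ker (TV : PiLp 2 (fun i => ↥(V i)) →ₗ[ℂ] H)
  have hrange : LinearMap.range (TV : PiLp 2 (fun i => ↥(V i)) →ₗ[ℂ] H) = ⊤ := by
    rw [LinearMap.range_eq_top]; exact hTVsurj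
  have hdom : Module.finrank ℂ (PiLp 2 (fun i => ↥(V i))) = ∑ i, Module.finrank ℂ (V i) :=
    (WithLp.linearEquiv 2 ℂ (∀ i, ↥(V i))).finrank_eq.trans (Module.finrank_pi_fintype ℂ)
  rw [hrange, finrank_top, hdom] at hrn
  have hrn' : Module.finrank ℂ H + Module.finrank ℂ (LinearMap.ker (TV : PiLp 2 (fun i => ↥(V i)) →ₗ[ℂ] H))
      = ∑ i, Module.finrank ℂ (V i) := hrn
  clear hrn
  have hker : Module.finrank ℂ (LinearMap.ker (TV : PiLp 2 (fun i => ↥(V i)) →ₗ[ℂ] H)) =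
      ∑ i, Module.finrank ℂ ↥(V i ⊓ ((W i)ᗮ).map (S : H →ₗ[ℂ] H)) := by
    have hsum : ∑ i, Module.finrank ℂ (V i) =
        Module.finrank ℂ H + ∑ i, Module.finrank ℂ ↥(V i ⊓ ((W i)ᗮ).map (S : H →ₗ[ℂ] H)) := by
      rw [← hdimW, ← Finset.sum_add_distrib]
      exact Finset.sum_congr rfl fun i _ => hdimV i
    omega
  refine ⟨hker, ?_⟩
  rw [hker]
  refine Finset.sum_le_sum fun i _ => ?_
  calc Module.finrank ℂ ↥(V i ⊓ ((W i)ᗮ).map (S : H →ₗ[ℂ] H))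
      ≤ Module.finrank ℂ ↥(((W i)ᗮ).map (S : H →ₗ[ℂ] H)) :=
        Submodule.finrank_mono inf_le_right
    _ = Module.finrank ℂ ↥((W i)ᗮ) := (LinearEquiv.finrank_map_eq S.toLinearEquiv ((W i)ᗮ)).trans rfl
end
end
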